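/- There is no ring of characteristic 0 whose group of units is cyclic of order 2^n for any n ≥ 3, nor one whose group of units is the quasi-cyclic 2-group. -/

import Mathlib

/-- The quasi-cyclic (Prüfer) `p`-group, realized as the subgroup of `ℂˣ`
consisting of all `p`-power roots of unity. -/
def pruferGroup (p : ℕ) : Subgroup ℂˣ where
  carrier := {x | ∃ n : ℕ, x ^ p ^ n = 1}
  one_mem' := ⟨0, one_pow _⟩
  mul_mem' := by
    rintro a b ⟨m, hm⟩ ⟨n, hn⟩
    exact ⟨m + n, by
      rw [mul_pow, pow_add, pow_mul, hm, one_pow, one_mul, mul_comm (p ^ m), pow_mul, hn,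
        one_pow]⟩
  inv_mem' := by
    rintro a ⟨n, hn⟩
    exact ⟨n, by rw [inv_pow, hn, inv_one]⟩


/-- Pell-type sequence: coefficients of `(1+√2)^k = x + y√2`. -/
def pellXY : ℕ → ℤ × ℤ
  | 0 => (1, 0)
  | k + 1 => ((pellXY k).1 + 2 * (pellXY k).2, (pellXY k).1 + (pellXY k).2)

lemma pellXY_pos : ∀ k : ℕ, 1 ≤ (pellXY k).1 ∧ 0 ≤ (pellXY k).2
  | 0 => by simp [pellXY]
  | k + 1 => by
    obtain ⟨h1, h2⟩ := pellXY_pos k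
    simp only [pellXY]
    constructor <;> omega

lemma pellXY_snd_pos {k : ℕ} (hk : 0 < k) : 1 ≤ (pellXY k).2 := by
  obtain ⟨j, rfl⟩ := Nat.exists_eq_add_of_lt hk
  obtain ⟨h1, h2⟩ := pellXY_pos j
  simp only [zero_add, pellXY]
  omega

lemma exists_infinite_order_unit (R : Type*) [Ring R] [CharZero R] (u : Rˣ)
    (hu : u ^ 4 = -1) : ∃ v : Rˣ, ∀ m : ℕ, 0 < m → v ^ m ≠ 1 := by
  set a : R := (u : R) with ha
  set b : R := ((u⁻¹ : Rˣ) : R) with hb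
  have hab : a * b = 1 := u.mul_inv
  have hba : b * a = 1 := u.inv_mul
  -- b^2 = -a^2
  have hinv : u⁻¹ ^ 2 = -(u ^ 2) := by
    have h1 : u ^ 2 * -(u ^ 2) = 1 := by
      rw [mul_neg, ← pow_add]
      norm_num [hu]
    rw [inv_pow]
    exact inv_eq_of_mul_eq_one_right h1
  have hb2 : b * b = -(a * a) := by
    have := congrArg (Units.val) hinv
    simpa [ha, hb, pow_two] using this
  set s : R := a + b with hs
  have hs2 : s * s = 2 := by
    have expand : s * s = a * b + b * a + (a * a + b * b) := by rw [hs]; noncomm_ring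
    rw [expand, hab, hba, hb2, add_neg_cancel]
    norm_num
  -- the unit 1 + s
  refine ⟨⟨1 + s, -1 + s, ?_, ?_⟩, ?_⟩
  · have e : (1 + s) * (-1 + s) = s * s - 1 := by noncomm_ring
    rw [e, hs2]; norm_num
  · have e : (-1 + s) * (1 + s) = s * s - 1 := by noncomm_ring
    rw [e, hs2]; norm_num
  · intro m hm hpow
    have key : ∀ k : ℕ, (1 + s) ^ k = ((pellXY k).1 : R) + ((pellXY k).2 : R) * s := by
      intro k
      induction k with
      | zero => simp [pellXY]
      | succ k ih =>
        rw [pow_succ, ih, pellXY]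
        have e : (((pellXY k).1 : R) + ((pellXY k).2 : R) * s) * (1 + s) =
            ((pellXY k).1 : R) + (((pellXY k).1 : R) + ((pellXY k).2 : R)) * s +
              ((pellXY k).2 : R) * (s * s) := by noncomm_ring
        rw [e, hs2]
        push_cast
        noncomm_ring
    have h1 : ((pellXY m).1 : R) + ((pellXY m).2 : R) * s = 1 := by
      have := congrArg Units.val hpow
      simpa [key m] using this
    set x := (pellXY m).1
    set y := (pellXY m).2
    have hys : (y : R) * s = ((1 - x : ℤ) : R) := by
      push_cast
      exact eq_sub_of_add_eq' h1
    have hsq : ((2 * y ^ 2 : ℤ) : R) = (((1 - x) ^ 2 : ℤ) : R) := by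
      calc ((2 * y ^ 2 : ℤ) : R) = (y : R) * ((y : R) * (s * s)) := by
            rw [hs2]; push_cast; noncomm_ring
        _ = ((y : R) * s) * ((y : R) * s) := by
            rw [mul_assoc]
            congr 1
            rw [← mul_assoc, ← mul_assoc, (Int.cast_commute y s).eq]
        _ = ((1 - x : ℤ) : R) * ((1 - x : ℤ) : R) := by rw [hys]
        _ = (((1 - x) ^ 2 : ℤ) : R) := by push_cast; noncomm_ring
    have hz : 2 * y ^ 2 = (1 - x) ^ 2 := Int.cast_injective hsq
    have hy1 : 1 ≤ y := pellXY_snd_pos hm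
    set q : ℚ := (1 - x : ℤ) / (y : ℤ) with hq
    have hq2 : (q : ℝ) ^ 2 = 2 := by
      have h' : ((1 : ℝ) - (x : ℝ)) ^ 2 = 2 * (y : ℝ) ^ 2 := by exact_mod_cast hz.symm
      have hy0 : (y : ℝ) ≠ 0 := by exact_mod_cast (show y ≠ 0 by omega)
      rw [hq]
      push_cast
      field_simp
      linarith [h']
    have hirr : Real.sqrt 2 = ((|q| : ℚ) : ℝ) := by
      rw [← hq2, Real.sqrt_sq_eq_abs]
      push_cast
      ring
    exact Rat.not_irrational |q| (hirr ▸ irrational_sqrt_two)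

theorem fuchs_stmt14 (R : Type*) [Ring R] (hchar : ringChar R = 0) :
    (∀ n : ℕ, 3 ≤ n → ¬ (IsCyclic Rˣ ∧ Nat.card Rˣ = 2 ^ n)) ∧
      ¬ Nonempty (Rˣ ≃* pruferGroup 2) := by
  have : CharP R 0 := ringChar.of_eq hchar
  have : CharZero R := CharP.charP_to_charZero R
  have hneg : (-1 : Rˣ) ≠ 1 := by
    intro h
    have h' : (-1 : R) = 1 := by
      have := congrArg Units.val h
      simpa using this
    have : (2 : R) = 0 := by
      have := congrArg (· + 1) h'
      simpa [one_add_one_eq_two] using this.symm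
    exact two_ne_zero this
  constructor
  · rintro n hn ⟨hcyc, hcard⟩
    have hfin : Finite Rˣ := Nat.finite_of_card_ne_zero (by rw [hcard]; positivity)
    obtain ⟨g, hg⟩ := hcyc.exists_generator
    have hord : orderOf g = 2 ^ n := by
      rw [orderOf_eq_card_of_forall_mem_zpowers hg, hcard]
    set u : Rˣ := g ^ (2 ^ (n - 3)) with hu
    have hordu : orderOf u = 8 := by
      rw [hu, orderOf_pow, hord, Nat.gcd_eq_right (pow_dvd_pow 2 (by omega)),
        Nat.pow_div (by omega) (by norm_num), show n - (n - 3) = 3 by omega]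
    set t : Rˣ := u ^ 4 with ht
    have hordt : orderOf t = 2 := by
      rw [ht, orderOf_pow, hordu]
      decide
    have ht2 : t ^ 2 = 1 := by
      rw [← hordt]; exact pow_orderOf_eq_one t
    have ht1 : t ≠ 1 := by
      intro h; rw [h] at hordt; simp at hordt
    -- uniqueness of the element of order 2 in a cyclic group
    have hth : t = -1 := by
      classical
      have : Fintype Rˣ := Fintype.ofFinite Rˣ
      by_contra hne
      have hsub : ({1, t, -1} : Finset Rˣ) ⊆ Finset.univ.filter (fun a => a ^ 2 = 1) := by
        intro x hx
        simp only [Finset.mem_insert, Finset.mem_singleton] at hx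
        rcases hx with rfl | rfl | rfl <;>
          simp [Finset.mem_filter, ht2]
      have hc3 : ({1, t, -1} : Finset Rˣ).card = 3 := by
        rw [Finset.card_insert_of_notMem (by simp [Ne.symm ht1, Ne.symm hneg]),
          Finset.card_insert_of_notMem (by simp [hne]), Finset.card_singleton]
      have := (Finset.card_le_card hsub).trans (IsCyclic.card_pow_eq_one_le (by norm_num))
      omega
    obtain ⟨v, hv⟩ := exists_infinite_order_unit R u (by rw [← ht, hth])
    exact hv (Nat.card Rˣ) (by rw [hcard]; positivity) pow_card_eq_one'
  · rintro ⟨φ⟩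
    -- the primitive 8th root of unity
    set z : ℂ := Complex.exp (Real.pi * Complex.I / 4) with hz
    have hz4 : z ^ 4 = -1 := by
      rw [hz, ← Complex.exp_nat_mul]
      norm_num
      rw [show (4 : ℂ) * (Real.pi * Complex.I / 4) = Real.pi * Complex.I by ring]
      exact Complex.exp_pi_mul_I
    have hz8 : z ^ 8 = 1 := by
      have : z ^ 8 = (z ^ 4) ^ 2 := by ring
      rw [this, hz4]; norm_num
    set ζ : ℂˣ := Units.mk0 z (Complex.exp_ne_zero _) with hζ
    have hζm : ζ ∈ pruferGroup 2 := ⟨3, by ext; simpa [hζ] using hz8⟩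
    set p : pruferGroup 2 := ⟨ζ, hζm⟩ with hp
    set u : Rˣ := φ.symm p with husym
    have hu4 : u ^ 4 = -1 := by
      apply φ.injective
      rw [map_pow, husym, MulEquiv.apply_symm_apply]
      -- φ (-1) is an element of order 2 in the Prüfer group, hence equals p ^ 4
      have hw2 : ((φ (-1) : ℂˣ) : ℂ) ^ 2 = 1 := by
        have : (φ (-1)) ^ 2 = 1 := by
          rw [← map_pow]
          norm_num
        have := congrArg (fun x : pruferGroup 2 => ((x : ℂˣ) : ℂ)) this
        simpa using this
      have hw1 : ((φ (-1) : ℂˣ) : ℂ) ≠ 1 := by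
        intro h
        apply hneg
        apply φ.injective
        apply Subtype.ext
        apply Units.ext
        simpa using h
      have hwval : ((φ (-1) : ℂˣ) : ℂ) = -1 := by
        have hw2' : ((φ (-1) : ℂˣ) : ℂ) * ((φ (-1) : ℂˣ) : ℂ) = 1 := by
          rw [← sq]; exact hw2
        rcases mul_self_eq_one_iff.mp hw2' with h | h
        · exact absurd h hw1
        · exact h
      have hpval : (((p ^ 4 : pruferGroup 2) : ℂˣ) : ℂ) = -1 := by
        simpa [hp, hζ] using hz4
      symm
      apply Subtype.ext
      apply Units.ext
      rw [hwval, hpval]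
    obtain ⟨v, hv⟩ := exists_infinite_order_unit R u hu4
    obtain ⟨k, hk⟩ := (φ v).2
    refine hv (2 ^ k) (by positivity) ?_
    apply φ.injective
    rw [map_pow, map_one]
    exact Subtype.ext hk
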